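/- Let R be a p-torsion-free commutative ring with p-adic completion R̂, and assume every element of R whose reduction mod p is a unit is itself a unit in R. Then the natural map GL_n(R[1/p])/GL_n(R) → GL_n(R̂[1/p])/GL_n(R̂) of left coset spaces is injective. -/

import Mathlib

set_option synthInstance.maxHeartbeats 1000000
set_option maxHeartbeats 1000000
set_option linter.unusedVariables false

section Aux
variable (p : ℕ) {R : Type*} [CommRing R]

private lemma aux_evalzero (x : AdicCompletion (Ideal.span {(p : R)}) R)
    (h : ∀ n, AdicCompletion.evalₐ (Ideal.span {(p : R)}) n x = 0) : x = 0 := by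
  ext n
  have := h n
  unfold AdicCompletion.evalₐ at this
  simp only [AlgHom.comp_apply, AlgHom.ofLinearMap_apply] at this
  have h2 : AdicCompletion.eval (Ideal.span {(p : R)}) R n x = 0 := by
    rw [← AdicCompletion.factor_evalₐ_eq_eval _ x (by rw [smul_eq_mul, Ideal.mul_top]), h n,
      map_zero]
  exact h2

private lemma aux_preg (htf : ∀ x : R, (p : R) * x = 0 → x = 0)
    (y : AdicCompletion (Ideal.span {(p : R)}) R)
    (h : (p : AdicCompletion (Ideal.span {(p : R)}) R) * y = 0) : y = 0 := by
  obtain ⟨f, rfl⟩ := AdicCompletion.mk_surjective (Ideal.span {(p : R)}) R y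
  apply aux_evalzero
  intro n
  have h1 : AdicCompletion.evalₐ (Ideal.span {(p : R)}) (n+1)
      ((p : AdicCompletion (Ideal.span {(p : R)}) R)
        * AdicCompletion.mk (Ideal.span {(p : R)}) R f) = 0 := by
    rw [h]; simp
  rw [map_mul, map_natCast, AdicCompletion.evalₐ_mk,
    ← map_natCast (Ideal.Quotient.mk ((Ideal.span {(p : R)})^(n+1))) p, ← map_mul] at h1
  have h2 : (p : R) * f.val (n+1) ∈ (Ideal.span {(p : R)})^(n+1) := by
    rwa [← Ideal.Quotient.eq_zero_iff_mem]
  rw [Ideal.span_singleton_pow, Ideal.mem_span_singleton] at h2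
  obtain ⟨z, hz⟩ := h2
  have h3 : f.val (n+1) = (p:R)^n * z := by
    apply sub_eq_zero.mp
    apply htf
    rw [mul_sub, hz, pow_succ]; ring
  have h4 := f.property (Nat.le_succ n)
  rw [SModEq.sub_mem] at h4
  have h5 : f.val n ∈ (Ideal.span {(p : R)})^n := by
    have h6 : f.val (n+1) ∈ (Ideal.span {(p : R)})^n := by
      rw [Ideal.span_singleton_pow, Ideal.mem_span_singleton]
      exact ⟨z, h3⟩
    have h7 : ((Ideal.span {(p : R)})^n • ⊤ : Submodule R R) = (Ideal.span {(p : R)})^n := by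
      rw [smul_eq_mul, Ideal.mul_top]
    rw [h7] at h4
    simpa using Ideal.add_mem _ h4 h6
  rw [AdicCompletion.evalₐ_mk, Ideal.Quotient.eq_zero_iff_mem]
  exact h5

private lemma aux_keydvd (r : R) (k : ℕ) (y : AdicCompletion (Ideal.span {(p : R)}) R)
    (h : algebraMap R (AdicCompletion (Ideal.span {(p : R)}) R) r
      = (p : AdicCompletion (Ideal.span {(p : R)}) R)^k * y) : ∃ s : R, r = (p : R)^k * s := by
  obtain ⟨f, rfl⟩ := AdicCompletion.mk_surjective (Ideal.span {(p : R)}) R y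
  have h1 := congrArg (AdicCompletion.evalₐ (Ideal.span {(p : R)}) (k+1)) h
  rw [AlgHom.commutes, map_mul, map_pow, map_natCast, AdicCompletion.evalₐ_mk] at h1
  rw [Ideal.Quotient.algebraMap_eq,
    ← map_natCast (Ideal.Quotient.mk ((Ideal.span {(p : R)})^(k+1))) p,
    ← map_pow, ← map_mul, Ideal.Quotient.eq] at h1
  rw [Ideal.span_singleton_pow, Ideal.mem_span_singleton] at h1
  obtain ⟨z, hz⟩ := h1
  refine ⟨f.val (k+1) + (p:R) * z, ?_⟩
  have : r - (p:R)^k * f.val (k+1) = (p:R)^(k+1) * z := hz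
  rw [mul_add]
  linear_combination this + (pow_succ (p:R) k) * z

private lemma aux_locmem (htf : ∀ x : R, (p : R) * x = 0 → x = 0)
    (x : Localization.Away (p : R)) (y : AdicCompletion (Ideal.span {(p : R)}) R)
    (h : Localization.awayMap (algebraMap R (AdicCompletion (Ideal.span {(p : R)}) R)) (p : R) x
      = algebraMap (AdicCompletion (Ideal.span {(p : R)}) R)
          (Localization.Away
            (algebraMap R (AdicCompletion (Ideal.span {(p : R)}) R) (p : R))) y) :
    ∃ s : R, x = algebraMap R (Localization.Away (p : R)) s := by
  obtain ⟨⟨r, m⟩, hr⟩ := IsLocalization.surj (Submonoid.powers (p : R)) x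
  obtain ⟨k, hk⟩ := m.2
  simp only at hr
  set f := algebraMap R (AdicCompletion (Ideal.span {(p : R)}) R) with hf
  set F := Localization.awayMap f (p : R) with hF
  have hFam : ∀ a : R, F (algebraMap R (Localization.Away (p:R)) a)
      = algebraMap (AdicCompletion (Ideal.span {(p : R)}) R)
          (Localization.Away (f (p:R))) (f a) := by
    intro a
    rw [hF]
    exact IsLocalization.map_eq _ a
  have h2 := congrArg F hr
  rw [map_mul, hFam, hFam, h] at h2
  have hm : (m : R) = (p:R)^k := hk.symm
  have hpreg : f (p:R) ∈ nonZeroDivisors (AdicCompletion (Ideal.span {(p : R)}) R) := by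
    rw [hf, map_natCast, mem_nonZeroDivisors_iff_right]
    intro z hz
    exact aux_preg p htf z (by rw [mul_comm]; exact hz)
  have hinj : Function.Injective
      (algebraMap (AdicCompletion (Ideal.span {(p : R)}) R)
        (Localization.Away (f (p:R)))) := by
    apply IsLocalization.injective (M := Submonoid.powers (f (p:R)))
    intro a ha
    obtain ⟨j, rfl⟩ := ha
    exact pow_mem hpreg j
  have h3 : f r = f (p:R)^k * y := by
    apply hinj
    rw [map_mul, map_pow, ← h2, hm, map_pow, map_pow, mul_comm]
  rw [hf, map_natCast] at h3
  obtain ⟨s, hs⟩ := aux_keydvd p r k y h3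
  refine ⟨s, ?_⟩
  have hu : IsUnit (algebraMap R (Localization.Away (p:R)) (m : R)) :=
    IsLocalization.map_units _ m
  have h4 : x * algebraMap R (Localization.Away (p:R)) (m:R)
      = algebraMap R (Localization.Away (p:R)) s
        * algebraMap R (Localization.Away (p:R)) (m:R) := by
    rw [hr, hs, hm, ← map_mul]
    ring_nf
  exact hu.mul_right_cancel h4

end Aux

/-- **Injectivity of `GLₙ(R[1/p])/GLₙ(R) → GLₙ(R̂[1/p])/GLₙ(R̂)`.**
Let `p` be prime, `R` a commutative ring in which `p` is a non-zero-divisor, with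
`p`-adic completion `R̂`, and assume every element of `R` whose reduction mod `p` is a
unit is a unit in `R`.  The natural map of left coset spaces
`GLₙ(R[1/p])/GLₙ(R) → GLₙ(R̂[1/p])/GLₙ(R̂)` is injective: if `g, g'` in `GLₙ(R[1/p])`
become equal modulo `GLₙ(R̂)` after mapping to `GLₙ(R̂[1/p])`, then they are already
equal modulo `GLₙ(R)`. -/
theorem gln_coset_map_injective
    (p : ℕ) (hp : p.Prime) (n : ℕ) (R : Type*) [CommRing R]
    (htf : ∀ x : R, (p : R) * x = 0 → x = 0)
    (hunit : ∀ x : R, IsUnit (Ideal.Quotient.mk (Ideal.span {(p : R)}) x) → IsUnit x)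
    (g g' : Matrix.GeneralLinearGroup (Fin n) (Localization.Away (p : R)))
    (h : ∃ u : Matrix.GeneralLinearGroup (Fin n) (AdicCompletion (Ideal.span {(p : R)}) R),
      Matrix.GeneralLinearGroup.map
          (Localization.awayMap
            (algebraMap R (AdicCompletion (Ideal.span {(p : R)}) R)) (p : R)) g
        = Matrix.GeneralLinearGroup.map
            (Localization.awayMap
              (algebraMap R (AdicCompletion (Ideal.span {(p : R)}) R)) (p : R)) g'
          * Matrix.GeneralLinearGroup.map
              (algebraMap (AdicCompletion (Ideal.span {(p : R)}) R)
                (Localization.Away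
                  (algebraMap R (AdicCompletion (Ideal.span {(p : R)}) R) (p : R)))) u) :
    ∃ v : Matrix.GeneralLinearGroup (Fin n) R,
      g = g' * Matrix.GeneralLinearGroup.map
        (algebraMap R (Localization.Away (p : R))) v := by
  obtain ⟨u, hu⟩ := h
  set F := Localization.awayMap (algebraMap R (AdicCompletion (Ideal.span {(p : R)}) R)) (p : R)
    with hF
  set G := algebraMap (AdicCompletion (Ideal.span {(p : R)}) R)
    (Localization.Away (algebraMap R (AdicCompletion (Ideal.span {(p : R)}) R) (p : R))) with hG
  set k := g'⁻¹ * g with hk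
  have hmapk : Matrix.GeneralLinearGroup.map F k = Matrix.GeneralLinearGroup.map G u := by
    rw [hk, map_mul, map_inv, hu, inv_mul_cancel_left]
  have hmapk' : Matrix.GeneralLinearGroup.map F k⁻¹ = Matrix.GeneralLinearGroup.map G u⁻¹ := by
    rw [map_inv, map_inv, hmapk]
  have entry : ∀ (w : Matrix.GeneralLinearGroup (Fin n) (Localization.Away (p:R)))
      (z : Matrix.GeneralLinearGroup (Fin n) (AdicCompletion (Ideal.span {(p : R)}) R)),
      Matrix.GeneralLinearGroup.map F w = Matrix.GeneralLinearGroup.map G z →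
      ∀ i j, ∃ s : R, (w : Matrix (Fin n) (Fin n) _) i j
        = algebraMap R (Localization.Away (p:R)) s := by
    intro w z hwz i j
    apply aux_locmem p htf _ ((z : Matrix (Fin n) (Fin n) _) i j)
    rw [← Matrix.GeneralLinearGroup.map_apply F i j w, hwz,
      Matrix.GeneralLinearGroup.map_apply]
  choose A hA using entry k u hmapk
  choose B hB using entry k⁻¹ u⁻¹ hmapk'
  have hinj : Function.Injective (algebraMap R (Localization.Away (p:R))) := by
    apply IsLocalization.injective (M := Submonoid.powers (p : R))
    intro a ha
    obtain ⟨j, rfl⟩ := ha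
    have hp0 : (p:R) ∈ nonZeroDivisors R := mem_nonZeroDivisors_iff_right.mpr fun z hz => htf z (by rw [mul_comm]; exact hz)
    exact pow_mem hp0 j
  have hAk : (Matrix.of A).map (algebraMap R (Localization.Away (p:R)))
      = (k : Matrix (Fin n) (Fin n) _) := by
    ext i j; simp [Matrix.map_apply, ← hA i j]
  have hBk : (Matrix.of B).map (algebraMap R (Localization.Away (p:R)))
      = ((k⁻¹ : Matrix.GeneralLinearGroup (Fin n) _) : Matrix (Fin n) (Fin n) _) := by
    ext i j; simp [Matrix.map_apply, ← hB i j]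
  have hmatinj : ∀ a b : Matrix (Fin n) (Fin n) R,
      a.map (algebraMap R (Localization.Away (p:R)))
        = b.map (algebraMap R (Localization.Away (p:R))) → a = b := by
    intro a b hab
    ext i j
    apply hinj
    have := congrArg (fun m => m i j) hab
    simpa [Matrix.map_apply] using this
  have hAB : Matrix.of A * Matrix.of B = 1 := by
    apply hmatinj
    rw [Matrix.map_mul, hAk, hBk, Matrix.map_one _ (map_zero _) (map_one _)]
    rw [← Units.val_mul, mul_inv_cancel k, Units.val_one]
  have hBA : Matrix.of B * Matrix.of A = 1 := by
    apply hmatinj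
    rw [Matrix.map_mul, hAk, hBk, Matrix.map_one _ (map_zero _) (map_one _)]
    rw [← Units.val_mul, inv_mul_cancel k, Units.val_one]
  refine ⟨⟨Matrix.of A, Matrix.of B, hAB, hBA⟩, ?_⟩
  have hv : Matrix.GeneralLinearGroup.map (algebraMap R (Localization.Away (p:R)))
      (⟨Matrix.of A, Matrix.of B, hAB, hBA⟩ : Matrix.GeneralLinearGroup (Fin n) R) = k := by
    apply Units.ext
    simpa [Matrix.GeneralLinearGroup.map] using hAk
  rw [hv, hk, mul_inv_cancel_left]
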